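/- Suppose a matrix-weighted network G with Laplacian L admits a gauge transformation D with division (V₁, V₂) and a vector ξ ∈ ℝ^d such that D(1_n ⊗ ξ) ∈ null(L). Then ξ lies in the null space of the weight matrix of every edge in the (V₁,V₂)-balancing set, i.e., ξ ∈ null(A_{lm}) for every edge (l,m) that is negative semi-definite within a part or positive semi-definite across the parts. -/

import Mathlib

open Matrix Finset

/-- Suppose the matrix-weighted network `G` with Laplacian `L` admits a
gauge transformation `D` with division `(V₁, V₂)` (encoded by `P : Fin n → Bool`) and a
vector `ξ ∈ ℝ^d` such that `D(1_n ⊗ ξ) ∈ null(L)`.  Then `ξ` lies in the null space of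
the weight matrix of every edge of the `(V₁,V₂)`-balancing set, i.e. `A_{lm} ξ = 0` for
every edge `(l,m)` that is negative semi-definite within a part or positive
semi-definite across the parts. -/
theorem gauge_in_nullspace_gives_null_of_balancing_set {n d : ℕ}
    (E : Fin n → Fin n → Prop)
    (hEsymm : ∀ i j, E i j → E j i) (hEirr : ∀ i, ¬ E i i)
    (A : Fin n → Fin n → Matrix (Fin d) (Fin d) ℝ)
    (hAsymm : ∀ i j, A i j = A j i)
    (hA0 : ∀ i j, ¬ E i j → A i j = 0)
    (s : Fin n → Fin n → ℝ) (hssymm : ∀ i j, s i j = s j i)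
    (hs : ∀ i j, E i j →
      (s i j = 1 ∧ (A i j).PosSemidef) ∨ (s i j = -1 ∧ (-(A i j)).PosSemidef))
    (L : Matrix (Fin n × Fin d) (Fin n × Fin d) ℝ)
    (hL : L = Matrix.of fun p q =>
      if p.1 = q.1 then (∑ k, s p.1 k • A p.1 k) p.2 q.2 else -(A p.1 q.1 p.2 q.2))
    (P : Fin n → Bool) (ξ : Fin d → ℝ)
    (hnull : L.mulVec (fun p => (if P p.1 then (1 : ℝ) else -1) * ξ p.2) = 0) :
    ∀ l m, E l m →
      ((P l = P m ∧ (-(A l m)).PosSemidef) ∨ (P l ≠ P m ∧ (A l m).PosSemidef)) →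
      (A l m).mulVec ξ = 0 := by
  intro l m hE hbal
  set σ : Fin n → ℝ := fun i => if P i then 1 else -1 with hσ
  have hσ2 : ∀ i, σ i * σ i = 1 := by
    intro i; simp only [hσ]; split <;> norm_num
  set x : Fin n × Fin d → ℝ := fun p => σ p.1 * ξ p.2 with hxdef
  have hx : L.mulVec x = 0 := hnull
  set q : Fin n → Fin n → ℝ := fun i j => ξ ⬝ᵥ (A i j).mulVec ξ with hq
  have hqeq : ∀ i j, q i j = ∑ a, ∑ b, ξ a * (A i j a b * ξ b) := by
    intro i j
    simp [hq, dotProduct, mulVec, Finset.mul_sum]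
  have hqii : ∀ i, q i i = 0 := by
    intro i; simp [hq, hA0 i i (hEirr i)]
  -- the quadratic form vanishes
  have h0 : x ⬝ᵥ L.mulVec x = 0 := by rw [hx]; simp
  -- edgewise value of the quadratic form
  have inner : ∀ i j, (∑ a, ∑ b, x (i, a) * (L (i, a) (j, b) * x (j, b)))
      = if i = j then (∑ k, s i k * q i k) else -(σ i * σ j * q i j) := by
    intro i j
    by_cases h : i = j
    · subst h
      simp only [if_pos rfl, hL, Matrix.of_apply]
      have hsum : ∀ a b : Fin d, (∑ k, s i k • A i k) a b = ∑ k, s i k * A i k a b := by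
        intro a b; simp [Matrix.sum_apply]
      calc (∑ a, ∑ b, x (i, a) * ((∑ k, s i k • A i k) a b * x (i, b)))
          = ∑ a, ∑ b, ∑ k, s i k * (σ i * σ i * (ξ a * (A i k a b * ξ b))) := by
            refine Finset.sum_congr rfl fun a _ => Finset.sum_congr rfl fun b _ => ?_
            rw [hsum a b, Finset.sum_mul, Finset.mul_sum]
            refine Finset.sum_congr rfl fun k _ => ?_
            simp only [hxdef]; ring
        _ = ∑ a, ∑ k, ∑ b, s i k * (σ i * σ i * (ξ a * (A i k a b * ξ b))) :=
            Finset.sum_congr rfl fun a _ => Finset.sum_comm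
        _ = ∑ k, ∑ a, ∑ b, s i k * (σ i * σ i * (ξ a * (A i k a b * ξ b))) :=
            Finset.sum_comm
        _ = ∑ k, s i k * q i k := by
            refine Finset.sum_congr rfl fun k _ => ?_
            rw [hqeq, Finset.mul_sum]
            refine Finset.sum_congr rfl fun a _ => ?_
            rw [Finset.mul_sum]
            refine Finset.sum_congr rfl fun b _ => ?_
            rw [hσ2]; ring
    · simp only [if_neg h, hL, Matrix.of_apply]
      have hterm : ∀ a b : Fin d, x (i, a) * (-(A i j a b) * x (j, b))
          = -(σ i * σ j) * (ξ a * (A i j a b * ξ b)) := by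
        intro a b; simp only [hxdef]; ring
      simp only [hterm, ← Finset.mul_sum]
      simp only [hq, dotProduct, mulVec]
      ring
  -- expand the quadratic form
  have expand : x ⬝ᵥ L.mulVec x = ∑ i, ∑ j, ∑ a, ∑ b, x (i, a) * (L (i, a) (j, b) * x (j, b)) := by
    simp only [dotProduct, Matrix.mulVec, Fintype.sum_prod_type, Finset.mul_sum]
    exact Finset.sum_congr rfl fun i _ => Finset.sum_comm
  have key : ∑ i, ∑ j, (s i j - σ i * σ j) * q i j = 0 := by
    have e1 : x ⬝ᵥ L.mulVec x
        = ∑ i, ∑ j, (if i = j then (∑ k, s i k * q i k) else -(σ i * σ j * q i j)) := by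
      rw [expand]
      exact Finset.sum_congr rfl fun i _ => Finset.sum_congr rfl fun j _ => inner i j
    have e2 : ∑ i, ∑ j, (if i = j then (∑ k, s i k * q i k) else -(σ i * σ j * q i j))
        = ∑ i, ∑ j, (s i j - σ i * σ j) * q i j := by
      refine Finset.sum_congr rfl fun i _ => ?_
      have split : ∀ j, (if i = j then (∑ k, s i k * q i k) else -(σ i * σ j * q i j))
          = (if i = j then (∑ k, s i k * q i k) else 0) + -(σ i * σ j * q i j) := by
        intro j; by_cases h : i = j
        · subst h; rw [if_pos rfl, if_pos rfl, hqii i]; ring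
        · rw [if_neg h, if_neg h]; ring
      simp only [split, Finset.sum_add_distrib, Finset.sum_ite_eq, Finset.mem_univ, ite_true]
      rw [← Finset.sum_add_distrib]
      exact Finset.sum_congr rfl fun j _ => by ring
    rw [← e2, ← e1, h0]
  -- each summand is nonnegative
  have hσσ1 : ∀ i j : Fin n, σ i * σ j = 1 ∨ σ i * σ j = -1 := by
    intro i j; simp only [hσ]; split_ifs <;> norm_num
  have hnn : ∀ i j, 0 ≤ (s i j - σ i * σ j) * q i j := by
    intro i j
    by_cases hEij : E i j
    · rcases hs i j hEij with ⟨h1, hpsd⟩ | ⟨h1, hpsd⟩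
      · have hq0 : 0 ≤ q i j := by simpa [hq] using hpsd.dotProduct_mulVec_nonneg ξ
        have hc : 0 ≤ s i j - σ i * σ j := by
          rcases hσσ1 i j with h | h <;> rw [h1, h] <;> norm_num
        exact mul_nonneg hc hq0
      · have hq0 : q i j ≤ 0 := by
          have h2 := hpsd.dotProduct_mulVec_nonneg ξ
          simp only [star_trivial, Matrix.neg_mulVec, dotProduct_neg] at h2
          simp only [hq]; linarith
        have hc : s i j - σ i * σ j ≤ 0 := by
          rcases hσσ1 i j with h | h <;> rw [h1, h] <;> norm_num
        nlinarith [mul_nonneg (neg_nonneg.2 hc) (neg_nonneg.2 hq0)]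
    · simp [hq, hA0 i j hEij]
  -- hence each summand is zero
  have hterm : (s l m - σ l * σ m) * q l m = 0 := by
    have houter : ∀ i ∈ Finset.univ, (0:ℝ) ≤ ∑ j, (s i j - σ i * σ j) * q i j :=
      fun i _ => Finset.sum_nonneg fun j _ => hnn i j
    have h1 := (Finset.sum_eq_zero_iff_of_nonneg houter).mp key l (Finset.mem_univ l)
    exact (Finset.sum_eq_zero_iff_of_nonneg fun j _ => hnn l j).mp h1 m (Finset.mem_univ m)
  -- finish by case analysis on the balancing condition
  rcases hbal with ⟨hPP, hpsdN⟩ | ⟨hne, hpsdP⟩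
  · have hσσ : σ l * σ m = 1 := by rw [show σ l = σ m by simp [hσ, hPP]]; exact hσ2 m
    have hqle : q l m ≤ 0 := by
      have h2 := hpsdN.dotProduct_mulVec_nonneg ξ
      simp only [star_trivial, Matrix.neg_mulVec, dotProduct_neg] at h2
      simp only [hq]; linarith
    have hq0 : q l m = 0 := by
      rcases hs l m hE with ⟨h1, hpsd⟩ | ⟨h1, _⟩
      · have : 0 ≤ q l m := by simpa [hq] using hpsd.dotProduct_mulVec_nonneg ξ
        linarith
      · rw [h1, hσσ] at hterm
        nlinarith [hterm]
    have hz : (-(A l m)).mulVec ξ = 0 := by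
      refine (hpsdN.dotProduct_mulVec_zero_iff ξ).mp ?_
      simp only [star_trivial, Matrix.neg_mulVec, dotProduct_neg]
      simp only [hq] at hq0
      rw [hq0]; ring
    rw [Matrix.neg_mulVec, neg_eq_zero] at hz
    exact hz
  · have hσσ : σ l * σ m = -1 := by
      simp only [hσ]
      cases hPl : P l with
      | true =>
        cases hPm : P m with
        | true => exact absurd (hPl.trans hPm.symm) hne
        | false => norm_num
      | false =>
        cases hPm : P m with
        | true => norm_num
        | false => exact absurd (hPl.trans hPm.symm) hne
    have hqge : 0 ≤ q l m := by simpa [hq] using hpsdP.dotProduct_mulVec_nonneg ξ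
    have hq0 : q l m = 0 := by
      rcases hs l m hE with ⟨h1, _⟩ | ⟨h1, hpsd⟩
      · rw [h1, hσσ] at hterm
        nlinarith [hterm]
      · have h2 := hpsd.dotProduct_mulVec_nonneg ξ
        simp only [star_trivial, Matrix.neg_mulVec, dotProduct_neg] at h2
        simp only [hq] at hqge ⊢
        linarith
    refine (hpsdP.dotProduct_mulVec_zero_iff ξ).mp ?_
    simp only [star_trivial]
    simpa [hq] using hq0
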